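/- (Corollary 2) Let μ be a probability measure on ℝ^{n_x} × ℝ, let T : ℝ^{n_x} → ℝ be a measurable predictor, and let σ̂ : ℝ^{n_x} → (0,∞) be a measurable strictly positive function. Let ε ∈ (0,1), δ ∈ (0,1), let the integer N satisfy N ≥ (7.47/ε) · ln(1/δ), and set r = ⌊εN/2⌋, assuming r ≥ 1. If (x₁,y₁), …, (x_N,y_N) are drawn i.i.d. from μ and γ_i = |y_i − T(x_i)| / σ̂(x_i) for i = 1,…,N, then the value γ̄ = rmax_r{γ_i}_{i=1}^N satisfies, with probability no smaller than 1−δ over the multisample drawn from the product measure μ^N, μ{ (x,y) : |y − T(x)| > γ̄ · σ̂(x) } ≤ ε. -/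

import Mathlib

open MeasureTheory
open Finset
open scoped ENNReal Classical

/-- The `r`-th largest value of the collection `{q i}_{i=1}^N`
(the element at position `r` in decreasing order, counted with multiplicity). -/
noncomputable def rmax {N : ℕ} (r : ℕ) (q : Fin N → ℝ) : ℝ :=
  ((List.ofFn q).insertionSort (· ≤ ·)).getD (N - r) 0


lemma lintegral_pi_prod {Ω : Type*} [MeasurableSpace Ω] (μ : Measure Ω) [SigmaFinite μ]
    (f : Ω → ℝ≥0∞) (hf : Measurable f) (N : ℕ) :
    ∫⁻ w, ∏ i, f (w i) ∂(Measure.pi fun _ : Fin N => μ) = (∫⁻ ω, f ω ∂μ) ^ N := by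
  induction N with
  | zero => simp
  | succ n ih =>
    have h := measurePreserving_piFinSuccAbove (fun _ : Fin (n+1) => μ) 0
    have hmeas : Measurable fun p : Ω × (Fin n → Ω) => f p.1 * ∏ i, f (p.2 i) := by
      apply Measurable.mul (hf.comp measurable_fst)
      exact Finset.measurable_prod _ fun i _ => hf.comp ((measurable_pi_apply i).comp measurable_snd)
    have key := h.lintegral_comp hmeas
    have heq : ∀ w : Fin (n+1) → Ω,
        (fun p : Ω × (Fin n → Ω) => f p.1 * ∏ i, f (p.2 i))
          (MeasurableEquiv.piFinSuccAbove (fun _ => Ω) 0 w) = ∏ i, f (w i) := by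
      intro w
      simp only [MeasurableEquiv.piFinSuccAbove, Fin.prod_univ_succ, Fin.succAbove_zero]
      rfl
    calc ∫⁻ w, ∏ i, f (w i) ∂(Measure.pi fun _ : Fin (n+1) => μ)
        = ∫⁻ w, (fun p : Ω × (Fin n → Ω) => f p.1 * ∏ i, f (p.2 i))
            (MeasurableEquiv.piFinSuccAbove (fun _ => Ω) 0 w)
            ∂(Measure.pi fun _ : Fin (n+1) => μ) := by
          exact (lintegral_congr fun w => (heq w).symm)
      _ = ∫⁻ p : Ω × (Fin n → Ω), f p.1 * ∏ i, f (p.2 i) ∂(μ.prod (Measure.pi fun _ => μ)) := key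
      _ = (∫⁻ ω, f ω ∂μ) * ∫⁻ w, ∏ i, f (w i) ∂(Measure.pi fun _ : Fin n => μ) := by
          exact lintegral_prod_mul hf.aemeasurable
            (Finset.measurable_prod univ (fun i _ => hf.comp (measurable_pi_apply i))).aemeasurable
      _ = (∫⁻ ω, f ω ∂μ) ^ (n + 1) := by rw [ih, pow_succ, mul_comm]

lemma count_le_bound {Ω : Type*} [MeasurableSpace Ω] (μ : Measure Ω) [IsProbabilityMeasure μ]
    (A : Set Ω) (hA : MeasurableSet A) (ε : ℝ) (hε0 : 0 < ε) (hε1 : ε ≤ 1)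
    (hAε : ENNReal.ofReal ε ≤ μ A) (N k : ℕ) :
    (Measure.pi fun _ : Fin N => μ) {w | (univ.filter fun i => w i ∈ A).card ≤ k}
      ≤ ENNReal.ofReal (2 ^ k * (1 - ε / 2) ^ N) := by
  classical
  set f : Ω → ℝ≥0∞ := fun ω => if ω ∈ A then (2⁻¹ : ℝ≥0∞) else 1 with hf
  have hfm : Measurable f := Measurable.ite hA measurable_const measurable_const
  -- the one-sample integral
  have hfint : ∫⁻ ω, f ω ∂μ ≤ ENNReal.ofReal (1 - ε / 2) := by
    have haT : (μ A) ≠ ⊤ := measure_ne_top μ A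
    set a : ℝ := (μ A).toReal with ha
    have ha0 : 0 ≤ a := ENNReal.toReal_nonneg
    have haε : ε ≤ a := by
      rw [ENNReal.ofReal_le_iff_le_toReal haT] at hAε; exact hAε
    have ha1 : a ≤ 1 := by
      have := prob_le_one (μ := μ) (s := A)
      calc a ≤ (1 : ℝ≥0∞).toReal := ENNReal.toReal_mono (by simp) this
        _ = 1 := by simp
    have hμA : μ A = ENNReal.ofReal a := (ENNReal.ofReal_toReal haT).symm
    have hμAc : μ Aᶜ = ENNReal.ofReal (1 - a) := by
      rw [measure_compl hA haT, measure_univ, hμA, ← ENNReal.ofReal_one,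
        ← ENNReal.ofReal_sub _ ha0]
    rw [← lintegral_add_compl f hA]
    have h2inv : (2⁻¹ : ℝ≥0∞) = ENNReal.ofReal (1/2) := by
      rw [one_div, ENNReal.ofReal_inv_of_pos (by norm_num), ENNReal.ofReal_ofNat]
    have h1 : ∫⁻ ω in A, f ω ∂μ = ENNReal.ofReal (1/2) * ENNReal.ofReal a := by
      rw [setLIntegral_congr_fun_ae hA (Filter.Eventually.of_forall fun ω hω => by
        simp only [hf]; rw [if_pos hω] : ∀ᵐ ω ∂μ, ω ∈ A → f ω = (2⁻¹ : ℝ≥0∞))]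
      rw [setLIntegral_const, hμA, h2inv]
    have h2 : ∫⁻ ω in Aᶜ, f ω ∂μ = ENNReal.ofReal (1 - a) := by
      rw [setLIntegral_congr_fun_ae hA.compl (Filter.Eventually.of_forall fun ω hω => by
        simp only [hf]; rw [if_neg hω] : ∀ᵐ ω ∂μ, ω ∈ Aᶜ → f ω = 1)]
      rw [setLIntegral_const, one_mul, hμAc]
    rw [h1, h2, ← ENNReal.ofReal_mul (by norm_num), ← ENNReal.ofReal_add (by positivity)
      (by linarith)]
    apply ENNReal.ofReal_le_ofReal; linarith
  -- product formula
  have hprod : ∀ w : Fin N → Ω,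
      ∏ i, f (w i) = (2⁻¹ : ℝ≥0∞) ^ (univ.filter fun i => w i ∈ A).card := by
    intro w
    simp [hf, Finset.prod_ite, Finset.prod_const]
  set E : Set (Fin N → Ω) := {w | (univ.filter fun i => w i ∈ A).card ≤ k} with hE
  have hCm : Measurable fun w : Fin N → Ω => (univ.filter fun i => w i ∈ A).card := by
    simp_rw [Finset.card_filter]
    exact Finset.measurable_sum _ fun i _ =>
      Measurable.ite (hA.preimage (measurable_pi_apply i)) measurable_const measurable_const
  have hEm : MeasurableSet E := hCm measurableSet_Iic
  have hmain : (2⁻¹ : ℝ≥0∞) ^ k * (Measure.pi fun _ : Fin N => μ) E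
      ≤ (ENNReal.ofReal (1 - ε / 2)) ^ N := by
    calc (2⁻¹ : ℝ≥0∞) ^ k * (Measure.pi fun _ : Fin N => μ) E
        = ∫⁻ w in E, (2⁻¹ : ℝ≥0∞) ^ k ∂(Measure.pi fun _ : Fin N => μ) := by
          rw [setLIntegral_const]
      _ ≤ ∫⁻ w in E, ∏ i, f (w i) ∂(Measure.pi fun _ : Fin N => μ) := by
          apply setLIntegral_mono
            ((Finset.measurable_prod univ fun i _ => hfm.comp (measurable_pi_apply i) :
              Measurable fun w : Fin N → Ω => ∏ i, f (w i)))
          intro w hw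
          rw [hprod w]
          exact pow_le_pow_of_le_one zero_le (by norm_num) hw
      _ ≤ ∫⁻ w, ∏ i, f (w i) ∂(Measure.pi fun _ : Fin N => μ) := setLIntegral_le_lintegral _ _
      _ = (∫⁻ ω, f ω ∂μ) ^ N := lintegral_pi_prod μ f hfm N
      _ ≤ (ENNReal.ofReal (1 - ε / 2)) ^ N := pow_le_pow_left' hfint N
  have hcancel : (2 : ℝ≥0∞) ^ k * (2⁻¹ : ℝ≥0∞) ^ k = 1 := by
    rw [← mul_pow, ENNReal.mul_inv_cancel (by norm_num) (by norm_num), one_pow]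
  calc (Measure.pi fun _ : Fin N => μ) E
      = (2 : ℝ≥0∞) ^ k * ((2⁻¹ : ℝ≥0∞) ^ k * (Measure.pi fun _ : Fin N => μ) E) := by
        rw [← mul_assoc, hcancel, one_mul]
    _ ≤ (2 : ℝ≥0∞) ^ k * (ENNReal.ofReal (1 - ε / 2)) ^ N := by
        gcongr
    _ = ENNReal.ofReal (2 ^ k * (1 - ε / 2) ^ N) := by
        rw [ENNReal.ofReal_mul (by positivity), ENNReal.ofReal_pow (by linarith :
          (0:ℝ) ≤ 1 - ε/2), ENNReal.ofReal_pow (by norm_num : (0:ℝ) ≤ 2),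
          ENNReal.ofReal_ofNat]
lemma arith_bound (ε δ : ℝ) (hε0 : 0 < ε) (hε1 : ε < 1) (hδ0 : 0 < δ) (hδ1 : δ < 1)
    (N r : ℕ) (hN : 7.47 / ε * Real.log (1 / δ) ≤ (N : ℝ))
    (hrle : (r : ℝ) ≤ ε * (N : ℝ) / 2) (hr : 1 ≤ r) :
    (2 : ℝ) ^ (r - 1) * (1 - ε / 2) ^ N ≤ δ := by
  set L : ℝ := Real.log (1 / δ) with hLdef
  have hLδ : L = -Real.log δ := by rw [hLdef, one_div, Real.log_inv]
  have hL : 0 < L := by rw [hLδ]; linarith [Real.log_neg hδ0 hδ1]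
  have hεN : 7.47 * L ≤ ε * N := by
    have h := mul_le_mul_of_nonneg_left hN hε0.le
    have h2 : ε * (7.47 / ε * L) = 7.47 * L := by field_simp
    linarith
  have hlog2 : Real.log 2 < 0.6931471808 := Real.log_two_lt_d9
  have hlog2pos : 0 < Real.log 2 := Real.log_pos (by norm_num)
  have hhalf : (0:ℝ) < 1 - ε / 2 := by linarith
  have hlog1e : Real.log (1 - ε / 2) ≤ -(ε / 2) := by
    have := Real.log_le_sub_one_of_pos hhalf
    linarith
  have hk : ((r - 1 : ℕ) : ℝ) ≤ ε * N / 2 := by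
    rw [Nat.cast_sub hr]
    push_cast
    linarith
  have key : ((r - 1 : ℕ) : ℝ) * Real.log 2 + (N : ℝ) * Real.log (1 - ε / 2)
      ≤ Real.log δ := by
    have h1 : ((r - 1 : ℕ) : ℝ) * Real.log 2 ≤ (ε * N / 2) * Real.log 2 :=
      mul_le_mul_of_nonneg_right hk hlog2pos.le
    have h2 : (N : ℝ) * Real.log (1 - ε / 2) ≤ (N : ℝ) * (-(ε / 2)) :=
      mul_le_mul_of_nonneg_left hlog1e (Nat.cast_nonneg N)
    have h3 : (ε * N / 2) * Real.log 2 - ε * N / 2 ≤ (7.47 * L / 2) * (Real.log 2 - 1) := by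
      nlinarith [mul_nonneg (by linarith : (0:ℝ) ≤ ε * N - 7.47 * L)
        (by linarith : (0:ℝ) ≤ 1 - Real.log 2)]
    have h4 : (7.47 * L / 2) * (Real.log 2 - 1) ≤ -L := by
      nlinarith [mul_nonneg hL.le (by linarith : (0:ℝ) ≤ 2.735 - 3.735 * Real.log 2)]
    have hNe : (N : ℝ) * (-(ε / 2)) = -(ε * N / 2) := by ring
    have hlogδ : Real.log δ = -L := by rw [hLδ]; ring
    rw [hlogδ]
    linarith
  calc (2 : ℝ) ^ (r - 1) * (1 - ε / 2) ^ N
      = Real.exp (((r - 1 : ℕ) : ℝ) * Real.log 2 + (N : ℝ) * Real.log (1 - ε / 2)) := by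
        rw [Real.exp_add, Real.exp_nat_mul, Real.exp_nat_mul, Real.exp_log two_pos,
          Real.exp_log hhalf]
    _ ≤ Real.exp (Real.log δ) := Real.exp_le_exp.mpr key
    _ = δ := Real.exp_log hδ0
section rmaxfacts
variable {N r : ℕ} (q : Fin N → ℝ)

lemma rmax_len : ((List.ofFn q).insertionSort (· ≤ ·)).length = N := by
  rw [(List.perm_insertionSort _ _).length_eq, List.length_ofFn]

lemma rmax_eq_get (hr : 1 ≤ r) (hrN : r ≤ N) :
    rmax r q = ((List.ofFn q).insertionSort (· ≤ ·)).get
      ⟨N - r, by rw [rmax_len]; omega⟩ := by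
  rw [rmax, List.getD_eq_getElem _ _ (by rw [rmax_len]; omega)]
  rfl

lemma rmax_mem (hr : 1 ≤ r) (hrN : r ≤ N) : ∃ i, rmax r q = q i := by
  have h := List.get_mem ((List.ofFn q).insertionSort (· ≤ ·)) ⟨N - r, by rw [rmax_len q]; omega⟩
  rw [← rmax_eq_get q hr hrN] at h
  have h2 := ((List.perm_insertionSort (· ≤ ·) (List.ofFn q)).mem_iff).mp h
  obtain ⟨i, hi⟩ := List.mem_ofFn.mp h2
  exact ⟨i, hi.symm⟩

lemma card_countP (p : ℝ → Prop) :
    (univ.filter fun i => p (q i)).card = (List.ofFn q).countP (fun x => decide (p x)) := by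
  rw [List.ofFn_eq_map, List.countP_map]
  rw [Fin.univ_def]
  simp [Finset.filter, Finset.card, Multiset.countP_eq_card_filter, List.countP_eq_length_filter]
  rfl

lemma card_gt_rmax (hr : 1 ≤ r) (hrN : r ≤ N) :
    (univ.filter fun i => rmax r q < q i).card ≤ r - 1 := by
  set l := (List.ofFn q).insertionSort (· ≤ ·) with hl
  have hlen : l.length = N := rmax_len q
  have hsort : l.Pairwise (· ≤ ·) := List.pairwise_insertionSort _ _
  set c := rmax r q with hc
  set m := N - r + 1 with hm
  have hcount : (univ.filter fun i => c < q i).card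
      = l.countP (fun x => decide (c < x)) := by
    rw [card_countP q (fun x => c < x)]
    exact (List.Perm.countP_eq _ (List.perm_insertionSort _ _)).symm
  rw [hcount, ← List.take_append_drop m l, List.countP_append]
  have htake : (l.take m).countP (fun x => decide (c < x)) = 0 := by
    rw [List.countP_eq_zero]
    intro a ha
    rw [List.mem_take_iff_getElem] at ha
    obtain ⟨j, hj, rfl⟩ := ha
    have hjle : j ≤ N - r := by omega
    have : l.get ⟨j, by omega⟩ ≤ l.get ⟨N - r, by omega⟩ :=
      hsort.rel_get_of_le (by simp [Fin.le_def]; omega)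
    rw [← rmax_eq_get q hr hrN] at this
    simpa using not_lt.mpr this
  rw [htake]
  have hdrop := List.countP_le_length (l := l.drop m) (p := fun x => decide (c < x))
  rw [List.length_drop] at hdrop
  omega

end rmaxfacts

theorem stmt8 (nx : ℕ) (μ : Measure ((Fin nx → ℝ) × ℝ)) [IsProbabilityMeasure μ]
    (T : (Fin nx → ℝ) → ℝ) (hT : Measurable T)
    (σhat : (Fin nx → ℝ) → ℝ) (hσm : Measurable σhat) (hσpos : ∀ x, 0 < σhat x)
    (ε δ : ℝ) (hε : ε ∈ Set.Ioo (0 : ℝ) 1) (hδ : δ ∈ Set.Ioo (0 : ℝ) 1)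
    (N r : ℕ) (hN : 7.47 / ε * Real.log (1 / δ) ≤ (N : ℝ))
    (hrdef : (r : ℤ) = ⌊ε * (N : ℝ) / 2⌋) (hr : 1 ≤ r) :
    ENNReal.ofReal (1 - δ) ≤
      (Measure.pi fun _ : Fin N => μ)
        {w : Fin N → (Fin nx → ℝ) × ℝ |
          μ {p : (Fin nx → ℝ) × ℝ |
              rmax r (fun i => |(w i).2 - T (w i).1| / σhat (w i).1) * σhat p.1 <
                |p.2 - T p.1|} ≤
            ENNReal.ofReal ε} := by
  obtain ⟨hε0, hε1⟩ := hε
  obtain ⟨hδ0, hδ1⟩ := hδ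
  -- basic index facts
  have hrle : (r : ℝ) ≤ ε * (N : ℝ) / 2 := by
    have h1 : ((r : ℤ) : ℝ) ≤ ε * (N : ℝ) / 2 := by rw [hrdef]; exact Int.floor_le _
    exact_mod_cast h1
  have hrN : r ≤ N := by
    have : (r : ℝ) ≤ (N : ℝ) := by nlinarith [Nat.cast_nonneg (α := ℝ) N]
    exact_mod_cast this
  -- the normalized residual
  set γ : (Fin nx → ℝ) × ℝ → ℝ := fun p => |p.2 - T p.1| / σhat p.1 with hγ
  have hγm : Measurable γ :=
    ((measurable_snd.sub (hT.comp measurable_fst)).abs).div (hσm.comp measurable_fst)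
  have hγ0 : ∀ p, 0 ≤ γ p := fun p => div_nonneg (abs_nonneg _) (hσpos p.1).le
  set S : ℝ → Set ((Fin nx → ℝ) × ℝ) := fun t => {p | t < γ p} with hS
  have hSm : ∀ t, MeasurableSet (S t) := fun t => measurableSet_lt measurable_const hγm
  have hSanti : Antitone S := fun t t' h p hp => lt_of_le_of_lt h hp
  have hset : ∀ c : ℝ, {p : (Fin nx → ℝ) × ℝ | c * σhat p.1 < |p.2 - T p.1|} = S c := by
    intro c; ext p
    simp only [Set.mem_setOf_eq, hS, hγ]
    rw [lt_div_iff₀ (hσpos p.1)]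
  -- the threshold set and its infimum
  set Tset : Set ℝ := {t | μ (S t) ≤ ENNReal.ofReal ε} with hTset
  have hne : Tset.Nonempty := by
    have htend : Filter.Tendsto (fun n : ℕ => μ (S n)) Filter.atTop (nhds (μ (⋂ n : ℕ, S n))) :=
      tendsto_measure_iInter_atTop (fun n => (hSm _).nullMeasurableSet)
        (fun n m h => hSanti (by exact_mod_cast h)) ⟨0, measure_ne_top μ _⟩
    have hempty : (⋂ n : ℕ, S n) = ∅ := by
      ext p
      simp only [Set.mem_iInter, Set.mem_empty_iff_false, iff_false, not_forall]
      obtain ⟨n, hn⟩ := exists_nat_gt (γ p)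
      exact ⟨n, by simp [hS]; exact hn.le⟩
    rw [hempty, measure_empty] at htend
    have := htend.eventually_lt_const (ENNReal.ofReal_pos.mpr hε0)
    obtain ⟨n, hn⟩ := this.exists
    exact ⟨n, hn.le⟩
  have hbdd : BddBelow Tset := by
    refine ⟨0, fun t ht => ?_⟩
    by_contra h
    push_neg at h
    have : S t = Set.univ := by
      ext p; simp only [Set.mem_univ, iff_true, hS, Set.mem_setOf_eq]
      exact lt_of_lt_of_le h (hγ0 p)
    rw [hTset] at ht
    simp only [Set.mem_setOf_eq, this, measure_univ] at ht
    have : (1 : ℝ≥0∞) < 1 := lt_of_le_of_lt ht (by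
      rw [← ENNReal.ofReal_one]; exact ENNReal.ofReal_lt_ofReal_iff_of_nonneg hε0.le |>.mpr hε1)
    exact absurd this (lt_irrefl _)
  set tstar : ℝ := sInf Tset with htstar
  have hup : ∀ t t', t ∈ Tset → t ≤ t' → t' ∈ Tset := fun t t' ht h =>
    le_trans (measure_mono (hSanti h)) ht
  have hlt : ∀ t, t < tstar → ENNReal.ofReal ε < μ (S t) := by
    intro t ht
    by_contra h
    push_neg at h
    exact absurd (csInf_le hbdd h) (not_le.mpr ht)
  -- construct the fixed set A
  obtain ⟨A, hAm, hAε, hApt⟩ :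
      ∃ A : Set ((Fin nx → ℝ) × ℝ), MeasurableSet A ∧ ENNReal.ofReal ε ≤ μ A ∧
        ∀ c : ℝ, c ∉ Tset → ∀ p ∈ A, c < γ p := by
    by_cases hts : μ (S tstar) ≤ ENNReal.ofReal ε
    · -- tstar ∈ Tset : take A = {p | tstar ≤ γ p}
      refine ⟨{p | tstar ≤ γ p}, measurableSet_le measurable_const hγm, ?_, ?_⟩
      · have hAeq : {p | tstar ≤ γ p} = ⋂ n : ℕ, S (tstar - 1 / (n + 1)) := by
          ext p
          simp only [Set.mem_setOf_eq, Set.mem_iInter, hS]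
          constructor
          · intro h n
            have : (0:ℝ) < 1 / (n + 1) := by positivity
            linarith
          · intro h
            by_contra hcon
            push_neg at hcon
            obtain ⟨n, hn⟩ := exists_nat_one_div_lt (by linarith : (0:ℝ) < tstar - γ p)
            have := h n
            linarith
        have htend : Filter.Tendsto (fun n : ℕ => μ (S (tstar - 1 / (n + 1)))) Filter.atTop
            (nhds (μ (⋂ n : ℕ, S (tstar - 1 / (n + 1))))) := by
          apply tendsto_measure_iInter_atTop (fun n => (hSm _).nullMeasurableSet)
            ?_ ⟨0, measure_ne_top μ _⟩
          intro n m h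
          apply hSanti
          have h1 : (1:ℝ) / (m + 1) ≤ 1 / (n + 1) := by
            apply one_div_le_one_div_of_le (by positivity)
            exact_mod_cast by omega
          linarith
        rw [hAeq]
        refine ge_of_tendsto htend (Filter.Eventually.of_forall fun n => ?_)
        refine (hlt _ ?_).le
        have : (0:ℝ) < 1 / (n + 1) := by positivity
        linarith
      · intro c hc p hp
        have hclt : c < tstar := by
          by_contra h
          push_neg at h
          exact hc (hup tstar c hts h)
        exact lt_of_lt_of_le hclt hp
    · -- μ (S tstar) > ε : take A = S tstar
      refine ⟨S tstar, hSm _, (not_le.mp hts).le, ?_⟩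
      intro c hc p hp
      have hcle : c ≤ tstar := by
        by_contra h
        push_neg at h
        obtain ⟨t, htm, htl⟩ := exists_lt_of_csInf_lt hne h
        exact hc (hup t c htm htl.le)
      exact lt_of_le_of_lt hcle hp
  -- the good event contains {w | r ≤ #{i | w i ∈ A}}
  set C : (Fin N → (Fin nx → ℝ) × ℝ) → ℕ :=
    fun w => (univ.filter fun i => w i ∈ A).card with hC
  have hsub : {w : Fin N → (Fin nx → ℝ) × ℝ | r ≤ C w} ⊆
      {w | μ {p : (Fin nx → ℝ) × ℝ |
          rmax r (fun i => |(w i).2 - T (w i).1| / σhat (w i).1) * σhat p.1 <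
            |p.2 - T p.1|} ≤ ENNReal.ofReal ε} := by
    intro w hw
    simp only [Set.mem_setOf_eq] at hw ⊢
    set c : ℝ := rmax r (fun i => γ (w i)) with hcdef
    rw [hset c]
    by_contra hcon
    push_neg at hcon
    have hcnot : c ∉ Tset := by rw [hTset]; simp only [Set.mem_setOf_eq]; exact not_le.mpr hcon
    have h1 : C w ≤ (univ.filter fun i => c < (fun i => γ (w i)) i).card := by
      apply Finset.card_le_card
      intro i hi
      simp only [Finset.mem_filter, Finset.mem_univ, true_and] at hi ⊢
      exact hApt c hcnot (w i) hi
    have h2 : (univ.filter fun i => c < (fun i => γ (w i)) i).card ≤ r - 1 :=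
      card_gt_rmax (fun i => γ (w i)) hr hrN
    omega
  -- measurability of the counting event
  have hCm : Measurable C := by
    rw [hC]
    simp_rw [Finset.card_filter]
    exact Finset.measurable_sum _ fun i _ =>
      Measurable.ite (hAm.preimage (measurable_pi_apply i)) measurable_const measurable_const
  set E : Set (Fin N → (Fin nx → ℝ) × ℝ) := {w | C w ≤ r - 1} with hE
  have hEm : MeasurableSet E := hCm measurableSet_Iic
  have hEc : Eᶜ = {w | r ≤ C w} := by
    ext w; simp only [Set.mem_compl_iff, Set.mem_setOf_eq, hE, not_le]; omega
  -- the probability bound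
  have hPE : (Measure.pi fun _ : Fin N => μ) E ≤ ENNReal.ofReal δ := by
    refine le_trans (count_le_bound μ A hAm ε hε0 hε1.le hAε N (r - 1)) ?_
    exact ENNReal.ofReal_le_ofReal
      (arith_bound ε δ hε0 hε1 hδ0 hδ1 N r hN hrle hr)
  calc ENNReal.ofReal (1 - δ)
      = 1 - ENNReal.ofReal δ := by
        rw [ENNReal.ofReal_sub _ hδ0.le, ENNReal.ofReal_one]
    _ ≤ 1 - (Measure.pi fun _ : Fin N => μ) E := tsub_le_tsub_left hPE 1
    _ = (Measure.pi fun _ : Fin N => μ) Eᶜ := by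
        rw [measure_compl hEm (measure_ne_top _ _), measure_univ]
    _ = (Measure.pi fun _ : Fin N => μ) {w | r ≤ C w} := by rw [hEc]
    _ ≤ _ := measure_mono hsub
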